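/- If σ₁, σ₂ ∈ S_{2n} ∖ W_n with σ₁ = τ_i σ₂ for an adjacent transposition τ_i = (i, i+1) with i ≠ n, and 0 < λ < 1, then the point v = λ·M(σ₁) + (1−λ)·M(σ₂) fails to lie on some type B hyperplane H_j^B = {x : x_j + x_{2n+1−j} = 2n+1} with j ∈ [n]; more precisely, there exists j ∈ [n] with v_j + v_{2n+1−j} ≠ 2n+1. -/

import Mathlib

/-- If `σ₁, σ₂ ∈ S_{2n} ∖ Wₙ` with `σ₁ = τ_m σ₂` for an adjacent transposition
`τ_m = (m, m+1)` with `m ≠ n` (here `i, j : Fin (2n)` encode the 1-based values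
`m = j` and `m + 1`, so `(i : ℕ) + 1 = j` and `(j : ℕ) ≠ n`), and `0 < λ < 1`, then the
point `v = λ·M(σ₁) + (1−λ)·M(σ₂)` fails to lie on some type `B` hyperplane `H_a^B` with
`a ∈ [n]`: there exists `a ∈ [n]` with `v_a + v_{2n+1−a} ≠ 2n+1`. -/
theorem convex_combination_off_typeB_hyperplane (n : ℕ)
    (σ₁ σ₂ : Equiv.Perm (Fin (2 * n))) (i j : Fin (2 * n))
    (hij : (i : ℕ) + 1 = (j : ℕ)) (hjn : (j : ℕ) ≠ n)
    (h1 : ¬ ∀ a : Fin (2 * n), ((σ₁ a : ℕ) + 1) + ((σ₁ a.rev : ℕ) + 1) = 2 * n + 1)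
    (h2 : ¬ ∀ a : Fin (2 * n), ((σ₂ a : ℕ) + 1) + ((σ₂ a.rev : ℕ) + 1) = 2 * n + 1)
    (hs : σ₁ = Equiv.swap i j * σ₂)
    (lam : ℝ) (hl0 : 0 < lam) (hl1 : lam < 1) :
    ∃ a : Fin (2 * n), (a : ℕ) < n ∧
      (lam * ((σ₁ a : ℝ) + 1) + (1 - lam) * ((σ₂ a : ℝ) + 1)) +
        (lam * ((σ₁ a.rev : ℝ) + 1) + (1 - lam) * ((σ₂ a.rev : ℝ) + 1)) ≠ 2 * n + 1 := by
  have hne : i ≠ j := by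
    intro h; rw [h] at hij; omega
  have hn0 : 0 < n := by have := i.is_lt; omega
  have happ : ∀ a, σ₁ a = Equiv.swap i j (σ₂ a) := by
    intro a; rw [hs]; rfl
  have hrevne : ∀ a : Fin (2 * n), a.rev ≠ a := by
    intro a h
    have hv : (a.rev : ℕ) = 2 * n - (a.val + 1) := Fin.val_rev a
    have := a.is_lt
    have : (a.rev : ℕ) = (a : ℕ) := by rw [h]
    omega
  set a₁ := σ₂⁻¹ i with ha₁
  set a₂ := σ₂⁻¹ j with ha₂
  have hσ2a₁ : σ₂ a₁ = i := Equiv.apply_symm_apply σ₂ i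
  have hσ2a₂ : σ₂ a₂ = j := Equiv.apply_symm_apply σ₂ j
  have heqa₁ : ∀ a, σ₂ a = i → a = a₁ := by
    intro a ha; rw [ha₁, ← ha, (by exact Equiv.symm_apply_apply σ₂ a : σ₂⁻¹ (σ₂ a) = a)]
  have heqa₂ : ∀ a, σ₂ a = j → a = a₂ := by
    intro a ha; rw [ha₂, ← ha, (by exact Equiv.symm_apply_apply σ₂ a : σ₂⁻¹ (σ₂ a) = a)]
  by_cases hc : a₂ = a₁.rev
  · -- case A: pair sums are all unchanged
    have key : ∀ a : Fin (2 * n), (σ₁ a : ℕ) + (σ₁ a.rev : ℕ) = (σ₂ a : ℕ) + (σ₂ a.rev : ℕ) := by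
      intro a
      by_cases hA : σ₂ a = i
      · have haa : a = a₁ := heqa₁ a hA
        have har : a.rev = a₂ := by rw [haa, ← hc]
        have h2r : σ₂ a.rev = j := by rw [har]; exact hσ2a₂
        rw [happ, happ, hA, h2r, Equiv.swap_apply_left, Equiv.swap_apply_right]
        omega
      · by_cases hB : σ₂ a = j
        · have haa : a = a₂ := heqa₂ a hB
          have har : a.rev = a₁ := by rw [haa, hc, Fin.rev_rev]
          have h2r : σ₂ a.rev = i := by rw [har]; exact hσ2a₁
          rw [happ, happ, hB, h2r, Equiv.swap_apply_left, Equiv.swap_apply_right]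
          omega
        · have h2ri : σ₂ a.rev ≠ i := by
            intro h
            have : a.rev = a₁ := heqa₁ _ h
            have : a = a₂ := by rw [hc, ← this, Fin.rev_rev]
            exact hB (by rw [this]; exact hσ2a₂)
          have h2rj : σ₂ a.rev ≠ j := by
            intro h
            have h' : a.rev = a₂ := heqa₂ _ h
            have : a = a₁ := by
              have := congrArg Fin.rev h'
              rw [Fin.rev_rev, hc, Fin.rev_rev] at this
              exact this
            exact hA (by rw [this]; exact hσ2a₁)
          rw [happ, happ, Equiv.swap_apply_of_ne_of_ne hA hB,
            Equiv.swap_apply_of_ne_of_ne h2ri h2rj]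
    push_neg at h2
    obtain ⟨a, ha⟩ := h2
    by_cases hlt : (a : ℕ) < n
    · refine ⟨a, hlt, ?_⟩
      intro hEq
      apply ha
      have hk := key a
      have hk' : ((σ₁ a : ℕ) : ℝ) + ((σ₁ a.rev : ℕ) : ℝ) = ((σ₂ a : ℕ) : ℝ) + ((σ₂ a.rev : ℕ) : ℝ) := by
        exact_mod_cast congrArg (fun x : ℕ => (x : ℝ)) hk
      have : (((σ₂ a : ℕ) + 1 + ((σ₂ a.rev : ℕ) + 1) : ℕ) : ℝ) = ((2 * n + 1 : ℕ) : ℝ) := by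
        push_cast
        nlinarith [hEq, hk']
      exact_mod_cast this
    · refine ⟨a.rev, ?_, ?_⟩
      · have hv : (a.rev : ℕ) = 2 * n - (a.val + 1) := Fin.val_rev a
        have := a.is_lt
        omega
      · rw [Fin.rev_rev]
        intro hEq
        apply ha
        have hk := key a
        have hk' : ((σ₁ a : ℕ) : ℝ) + ((σ₁ a.rev : ℕ) : ℝ) = ((σ₂ a : ℕ) : ℝ) + ((σ₂ a.rev : ℕ) : ℝ) := by
          exact_mod_cast congrArg (fun x : ℕ => (x : ℝ)) hk
        have : (((σ₂ a : ℕ) + 1 + ((σ₂ a.rev : ℕ) + 1) : ℕ) : ℝ) = ((2 * n + 1 : ℕ) : ℝ) := by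
          push_cast
          nlinarith [hEq, hk']
        exact_mod_cast this
  · -- case B: pair of a₁ has sum increased by exactly 1
    have hσ1a₁ : (σ₁ a₁ : ℕ) = (σ₂ a₁ : ℕ) + 1 := by
      rw [happ, hσ2a₁, Equiv.swap_apply_left]; omega
    have h2ri : σ₂ a₁.rev ≠ i := by
      intro h
      exact hrevne a₁ (heqa₁ _ h)
    have h2rj : σ₂ a₁.rev ≠ j := by
      intro h
      exact hc ((heqa₂ _ h).symm)
    have hσ1rev : σ₁ a₁.rev = σ₂ a₁.rev := by
      rw [happ, Equiv.swap_apply_of_ne_of_ne h2ri h2rj]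
    -- the key arithmetic fact
    have main : ∀ a : Fin (2 * n),
        ((σ₁ a : ℕ) + (σ₁ a.rev : ℕ) = (σ₂ a : ℕ) + (σ₂ a.rev : ℕ) + 1) →
        (lam * ((σ₁ a : ℝ) + 1) + (1 - lam) * ((σ₂ a : ℝ) + 1)) +
          (lam * ((σ₁ a.rev : ℝ) + 1) + (1 - lam) * ((σ₂ a.rev : ℝ) + 1)) ≠ 2 * n + 1 := by
      intro a hsum hEq
      set S : ℕ := (σ₂ a : ℕ) + (σ₂ a.rev : ℕ) + 2 with hS
      have hk' : ((σ₁ a : ℕ) : ℝ) + ((σ₁ a.rev : ℕ) : ℝ)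
          = ((σ₂ a : ℕ) : ℝ) + ((σ₂ a.rev : ℕ) : ℝ) + 1 := by
        exact_mod_cast congrArg (fun x : ℕ => (x : ℝ)) hsum
      have hval : (S : ℝ) + lam = 2 * n + 1 := by
        push_cast [hS]
        nlinarith [hEq, hk']
      rcases le_or_gt (2 * n + 1) S with h | h
      · have : (2 * n + 1 : ℝ) ≤ (S : ℝ) := by exact_mod_cast h
        linarith
      · have : S ≤ 2 * n := by omega
        have : (S : ℝ) ≤ 2 * n := by exact_mod_cast this
        linarith
    have hsum₁ : (σ₁ a₁ : ℕ) + (σ₁ a₁.rev : ℕ) = (σ₂ a₁ : ℕ) + (σ₂ a₁.rev : ℕ) + 1 := by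
      rw [hσ1a₁, hσ1rev]; omega
    by_cases hlt : (a₁ : ℕ) < n
    · exact ⟨a₁, hlt, main a₁ hsum₁⟩
    · refine ⟨a₁.rev, ?_, ?_⟩
      · have hv : (a₁.rev : ℕ) = 2 * n - (a₁.val + 1) := Fin.val_rev a₁
        have := a₁.is_lt
        omega
      · apply main
        rw [Fin.rev_rev, hσ1a₁, hσ1rev]
        omega
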